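/- arXiv:1007.0683 — 2 statements merged into one kernel-verified Lean document; each statement's English description precedes it below -/
import Mathlib

section
/- Let n_X^i (for X ∈ S and 1 ≤ i ≤ τ_X) be nonnegative integers such that n_X^i ≤ T/τ_X for all X and i, and Σ_{X∈S} Σ_{i=1}^{τ_X} n_X^i ≤ T. Then there exists a schedule of one frame, i.e., a function σ : {0,…,T−1} → Option S, such that for every task X ∈ S: Σ_{p=0}^{T/τ_X − 1} Σ_{i=1}^{m_X(p)} r_X^i ≥ Σ_{i=1}^{τ_X} n_X^i r_X^i, where m_X(p) denotes the number of slots t in the p-th period [pτ_X, (p+1)τ_X) of X with σ(t) = X. -/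
set_option linter.unusedSectionVars false
set_option maxHeartbeats 800000

namespace RewardSched
open Finset

variable {S : Type*} [Fintype S] [DecidableEq S]

def per (τ : S → ℕ) (X : S) (p : ℕ) : Finset ℕ := Finset.Ico (p * τ X) ((p + 1) * τ X)

def ct (τ : S → ℕ) (X : S) (Q : Finset ℕ) (A : Finset ℕ) : ℕ :=
  (Q.filter fun p => per τ X p ⊆ A).card

lemma per_card (τ : S → ℕ) (X : S) (p : ℕ) : (per τ X p).card = τ X := by
  simp [per, Nat.card_Ico, add_mul]

lemma per_disjoint (τ : S → ℕ) (X : S) {p q : ℕ} (h : p ≠ q) :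
    Disjoint (per τ X p) (per τ X q) := by
  rw [Finset.disjoint_left]
  intro t ht ht'
  simp only [per, Finset.mem_Ico] at ht ht'
  rcases lt_or_gt_of_ne h with h' | h'
  · have : (p + 1) * τ X ≤ q * τ X := Nat.mul_le_mul_right _ h'
    omega
  · have : (q + 1) * τ X ≤ p * τ X := Nat.mul_le_mul_right _ h'
    omega

lemma ct_le_card (τ : S → ℕ) (X : S) (Q A : Finset ℕ) : ct τ X Q A ≤ Q.card :=
  Finset.card_le_card (Finset.filter_subset _ _)

lemma ct_mono (τ : S → ℕ) (X : S) (Q : Finset ℕ) {A B : Finset ℕ} (h : A ⊆ B) :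
    ct τ X Q A ≤ ct τ X Q B := by
  apply Finset.card_le_card
  apply Finset.monotone_filter_right
  intro p _ hp
  exact hp.trans h

lemma ct_supermod (τ : S → ℕ) (X : S) (Q A B : Finset ℕ) :
    ct τ X Q A + ct τ X Q B ≤ ct τ X Q (A ∪ B) + ct τ X Q (A ∩ B) := by
  classical
  have hunion : (Q.filter fun p => per τ X p ⊆ A) ∪ (Q.filter fun p => per τ X p ⊆ B)
      ⊆ Q.filter fun p => per τ X p ⊆ A ∪ B := by
    intro p hp
    rcases Finset.mem_union.1 hp with hp | hp <;>
      simp only [Finset.mem_filter] at hp ⊢ <;>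
      exact ⟨hp.1, hp.2.trans (by simp [Finset.subset_union_left, Finset.subset_union_right])⟩
  have hinter : (Q.filter fun p => per τ X p ⊆ A) ∩ (Q.filter fun p => per τ X p ⊆ B)
      = Q.filter fun p => per τ X p ⊆ A ∩ B := by
    ext p
    simp only [Finset.mem_inter, Finset.mem_filter, Finset.subset_inter_iff]
    tauto
  calc ct τ X Q A + ct τ X Q B
      = ((Q.filter fun p => per τ X p ⊆ A) ∪ (Q.filter fun p => per τ X p ⊆ B)).card
        + ((Q.filter fun p => per τ X p ⊆ A) ∩ (Q.filter fun p => per τ X p ⊆ B)).card := by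
        rw [Finset.card_union_add_card_inter]; rfl
    _ ≤ ct τ X Q (A ∪ B) + ct τ X Q (A ∩ B) :=
        add_le_add (Finset.card_le_card hunion) (le_of_eq (by rw [hinter]; rfl))

lemma ct_mul_le (τ : S → ℕ) (X : S) (T : ℕ) (A : Finset ℕ) :
    ct τ X (Finset.range (T / τ X)) A * τ X ≤ A.card := by
  classical
  set Q' := (Finset.range (T / τ X)).filter fun p => per τ X p ⊆ A with hQ'
  have hsub : Q'.biUnion (per τ X) ⊆ A := by
    intro t ht
    rcases Finset.mem_biUnion.1 ht with ⟨p, hp, hpt⟩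
    exact (Finset.mem_filter.1 hp).2 hpt
  have hcard : (Q'.biUnion (per τ X)).card = Q'.card * τ X := by
    rw [Finset.card_biUnion]
    · rw [Finset.sum_congr rfl fun p _ => per_card τ X p]
      simp [Finset.sum_const, mul_comm]
    · intro x _ y _ hxy
      exact per_disjoint τ X hxy
  calc ct τ X (Finset.range (T / τ X)) A * τ X = Q'.card * τ X := rfl
    _ = (Q'.biUnion (per τ X)).card := hcard.symm
    _ ≤ A.card := Finset.card_le_card hsub

/-! ## Demand and the invariant -/

def fterm (τ : S → ℕ) (T : ℕ) (EX : Finset ℕ) (RX : ℕ) (X : S) (A : Finset ℕ) : ℕ :=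
  (RX + ct τ X (Finset.range (T / τ X) \ EX) A) - (Finset.range (T / τ X) \ EX).card

def demX (τ : S → ℕ) (T : ℕ) (c : S → ℕ) (EX : Finset ℕ) (RX : ℕ) (X : S) (A : Finset ℕ) : ℕ :=
  (c X / (T / τ X)) * ct τ X (Finset.range (T / τ X)) A + ct τ X EX A + fterm τ T EX RX X A

def Dm (τ : S → ℕ) (T : ℕ) (c : S → ℕ) (E : S → Finset ℕ) (R : S → ℕ) (A : Finset ℕ) : ℕ :=
  ∑ X : S, demX τ T c (E X) (R X) X A

def INV (τ : S → ℕ) (T : ℕ) (c : S → ℕ) (E : S → Finset ℕ) (R : S → ℕ) : Prop :=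
  ∀ A : Finset ℕ, A ⊆ Finset.range T → Dm τ T c E R A ≤ A.card

lemma fterm_supermod (τ : S → ℕ) (T : ℕ) (EX : Finset ℕ) (RX : ℕ) (X : S) (A B : Finset ℕ) :
    fterm τ T EX RX X A + fterm τ T EX RX X B
      ≤ fterm τ T EX RX X (A ∪ B) + fterm τ T EX RX X (A ∩ B) := by
  have h := ct_supermod τ X (Finset.range (T / τ X) \ EX) A B
  have h1 := ct_mono τ X (Finset.range (T / τ X) \ EX) (Finset.inter_subset_left (s₁ := A) (s₂ := B))
  have h2 := ct_mono τ X (Finset.range (T / τ X) \ EX) (Finset.inter_subset_right (s₁ := A) (s₂ := B))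
  have h3 := ct_mono τ X (Finset.range (T / τ X) \ EX) (Finset.subset_union_left (s₁ := A) (s₂ := B))
  have h4 := ct_mono τ X (Finset.range (T / τ X) \ EX) (Finset.subset_union_right (s₁ := A) (s₂ := B))
  unfold fterm
  omega

lemma demX_supermod (τ : S → ℕ) (T : ℕ) (c : S → ℕ) (EX : Finset ℕ) (RX : ℕ) (X : S)
    (A B : Finset ℕ) :
    demX τ T c EX RX X A + demX τ T c EX RX X B
      ≤ demX τ T c EX RX X (A ∪ B) + demX τ T c EX RX X (A ∩ B) := by
  have h1 := Nat.mul_le_mul_left (c X / (T / τ X)) (ct_supermod τ X (Finset.range (T / τ X)) A B)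
  rw [Nat.mul_add, Nat.mul_add] at h1
  have h2 := ct_supermod τ X EX A B
  have h3 := fterm_supermod τ T EX RX X A B
  unfold demX
  omega

lemma Dm_supermod (τ : S → ℕ) (T : ℕ) (c : S → ℕ) (E : S → Finset ℕ) (R : S → ℕ)
    (A B : Finset ℕ) :
    Dm τ T c E R A + Dm τ T c E R B ≤ Dm τ T c E R (A ∪ B) + Dm τ T c E R (A ∩ B) := by
  unfold Dm
  rw [← Finset.sum_add_distrib, ← Finset.sum_add_distrib]
  exact Finset.sum_le_sum fun X _ => demX_supermod τ T c (E X) (R X) X A B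

/-! ## The initial invariant (fluid bound) -/

lemma inv_init (τ : S → ℕ) (T : ℕ) (c : S → ℕ)
    (hτ : ∀ X, 0 < τ X) (hdvd : ∀ X, τ X ∣ T) (hT : 0 < T)
    (hc : ∑ X : S, c X ≤ T) :
    INV τ T c (fun _ => ∅) (fun X => c X % (T / τ X)) := by
  intro A hA
  have key : ∀ X : S, demX τ T c ∅ (c X % (T / τ X)) X A * T ≤ c X * A.card := by
    intro X
    have hPτ : (T / τ X) * τ X = T := Nat.div_mul_cancel (hdvd X)
    have hP0 : 0 < T / τ X := Nat.div_pos (Nat.le_of_dvd hT (hdvd X)) (hτ X)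
    set P := T / τ X with hP
    set β := c X / P with hβ
    set s := c X % P with hs
    have hβs : P * β + s = c X := Nat.div_add_mod _ _
    have hsP : s < P := Nat.mod_lt _ hP0
    set q := ct τ X (Finset.range P) A with hq
    have hqP : q ≤ P := (ct_le_card _ _ _ _).trans (by simp)
    have hqτ : q * τ X ≤ A.card := ct_mul_le τ X T A
    have hdem : demX τ T c ∅ s X A = β * q + ((s + q) - P) := by
      unfold demX fterm ct
      simp [Finset.sdiff_empty, Finset.card_range, Finset.filter_empty]
      rfl
    have hkey : P * (β * q + ((s + q) - P)) ≤ c X * q := by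
      rcases le_or_gt (s + q) P with h | h
      · have h0 : (s + q) - P = 0 := by omega
        rw [h0, add_zero]
        calc P * (β * q) = (P * β) * q := by ring
          _ ≤ c X * q := Nat.mul_le_mul_right _ (by omega)
      · have h1 : ((P : ℤ) - s) * ((P : ℤ) - q) ≥ 0 :=
          mul_nonneg (by push_cast; omega) (by push_cast; omega)
        have h2 : (P : ℤ) * β + s = c X := by exact_mod_cast hβs
        zify [Nat.le_of_lt h]
        nlinarith [h1, h2]
    calc demX τ T c ∅ s X A * T = demX τ T c ∅ s X A * (P * τ X) := by rw [hPτ]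
      _ = (P * demX τ T c ∅ s X A) * τ X := by ring
      _ = (P * (β * q + ((s + q) - P))) * τ X := by rw [hdem]
      _ ≤ (c X * q) * τ X := Nat.mul_le_mul_right _ hkey
      _ = c X * (q * τ X) := by ring
      _ ≤ c X * A.card := Nat.mul_le_mul_left _ hqτ
  have hchain : Dm τ T c (fun _ => ∅) (fun X => c X % (T / τ X)) A * T ≤ A.card * T := by
    calc Dm τ T c (fun _ => ∅) (fun X => c X % (T / τ X)) A * T
        = ∑ X : S, demX τ T c ∅ (c X % (T / τ X)) X A * T := by
          rw [Dm, Finset.sum_mul]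
      _ ≤ ∑ X : S, c X * A.card := Finset.sum_le_sum fun X _ => key X
      _ = (∑ X : S, c X) * A.card := by rw [Finset.sum_mul]
      _ ≤ T * A.card := Nat.mul_le_mul_right _ hc
      _ = A.card * T := by ring
  exact Nat.le_of_mul_le_mul_right hchain hT

/-! ## Uncrossing tight sets -/

lemma tight_union (τ : S → ℕ) (T : ℕ) (c : S → ℕ) (E : S → Finset ℕ) (R : S → ℕ)
    (hinv : INV τ T c E R) (Y : S) {A B : Finset ℕ}
    (hA : A ⊆ Finset.range T) (hB : B ⊆ Finset.range T)
    (tA : Dm τ T c E R A = A.card) (tB : Dm τ T c E R B = B.card)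
    (fA : fterm τ T (E Y) (R Y) Y A = 0) (fB : fterm τ T (E Y) (R Y) Y B = 0) :
    A ∪ B ⊆ Finset.range T ∧ Dm τ T c E R (A ∪ B) = (A ∪ B).card ∧
      fterm τ T (E Y) (R Y) Y (A ∪ B) = 0 := by
  have hU : A ∪ B ⊆ Finset.range T := Finset.union_subset hA hB
  have hI : A ∩ B ⊆ Finset.range T := Finset.inter_subset_left.trans hA
  refine ⟨hU, ?_⟩
  have hsum := Dm_supermod τ T c E R A B
  have h1 := hinv _ hU
  have h2 := hinv _ hI
  have hcards := Finset.card_union_add_card_inter A B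
  have tU : Dm τ T c E R (A ∪ B) = (A ∪ B).card := by omega
  have tI : Dm τ T c E R (A ∩ B) = (A ∩ B).card := by omega
  refine ⟨tU, ?_⟩
  -- extract per-task equality at Y
  have hsumeq : ∑ X : S, (demX τ T c (E X) (R X) X A + demX τ T c (E X) (R X) X B)
      = ∑ X : S, (demX τ T c (E X) (R X) X (A ∪ B) + demX τ T c (E X) (R X) X (A ∩ B)) := by
    rw [Finset.sum_add_distrib, Finset.sum_add_distrib]
    have e1 : ∑ X : S, demX τ T c (E X) (R X) X A = Dm τ T c E R A := rfl
    have e2 : ∑ X : S, demX τ T c (E X) (R X) X B = Dm τ T c E R B := rfl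
    have e3 : ∑ X : S, demX τ T c (E X) (R X) X (A ∪ B) = Dm τ T c E R (A ∪ B) := rfl
    have e4 : ∑ X : S, demX τ T c (E X) (R X) X (A ∩ B) = Dm τ T c E R (A ∩ B) := rfl
    rw [e1, e2, e3, e4]
    omega
  have hpt := (Finset.sum_eq_sum_iff_of_le
      (fun X _ => demX_supermod τ T c (E X) (R X) X A B)).1 hsumeq Y (Finset.mem_univ Y)
  -- split into components
  have hq := Nat.mul_le_mul_left (c Y / (T / τ Y)) (ct_supermod τ Y (Finset.range (T / τ Y)) A B)
  rw [Nat.mul_add, Nat.mul_add] at hq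
  have he := ct_supermod τ Y (E Y) A B
  have hf := fterm_supermod τ T (E Y) (R Y) Y A B
  unfold demX at hpt
  omega

/-! ## The augmenting step -/

lemma inv_step (τ : S → ℕ) (T : ℕ) (c : S → ℕ) (E : S → Finset ℕ) (R : S → ℕ)
    (hE : ∀ X, E X ⊆ Finset.range (T / τ X)) (hinv : INV τ T c E R) (Y : S) (hRY : 1 ≤ R Y) :
    ∃ p ∈ Finset.range (T / τ Y), p ∉ E Y ∧
      INV τ T c (Function.update E Y (insert p (E Y))) (Function.update R Y (R Y - 1)) := by
  classical
  set 𝒜 := ((Finset.range T).powerset).filter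
      (fun A => Dm τ T c E R A = A.card ∧ fterm τ T (E Y) (R Y) Y A = 0) with h𝒜
  set M := 𝒜.sup id with hM
  have hPM : M ⊆ Finset.range T ∧ Dm τ T c E R M = M.card ∧ fterm τ T (E Y) (R Y) Y M = 0 := by
    rw [hM]
    apply Finset.sup_induction (p := fun A : Finset ℕ =>
      A ⊆ Finset.range T ∧ Dm τ T c E R A = A.card ∧ fterm τ T (E Y) (R Y) Y A = 0)
    · simp only [Finset.bot_eq_empty]
      refine ⟨Finset.empty_subset _, ?_, ?_⟩
      · have := hinv ∅ (Finset.empty_subset _)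
        simpa using this
      · have h0 : Dm τ T c E R ∅ = 0 := by
          have := hinv ∅ (Finset.empty_subset _); simpa using this
        have hle : fterm τ T (E Y) (R Y) Y ∅ ≤ Dm τ T c E R ∅ := by
          calc fterm τ T (E Y) (R Y) Y ∅ ≤ demX τ T c (E Y) (R Y) Y ∅ := by
                unfold demX; omega
            _ ≤ Dm τ T c E R ∅ :=
                Finset.single_le_sum (f := fun X => demX τ T c (E X) (R X) X ∅)
                  (fun _ _ => Nat.zero_le _) (Finset.mem_univ Y)
        omega
    · intro a ⟨ha1, ha2, ha3⟩ b ⟨hb1, hb2, hb3⟩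
      exact tight_union τ T c E R hinv Y ha1 hb1 ha2 hb2 ha3 hb3
    · intro A hA
      rw [h𝒜] at hA
      have h1 := Finset.mem_filter.1 hA
      exact ⟨Finset.mem_powerset.1 (Finset.mem_filter.1 hA).1, h1.2.1, h1.2.2⟩
  obtain ⟨hM1, hM2, hM3⟩ := hPM
  -- a free period of Y whose interval is not inside M
  have hcount : R Y + ct τ Y (Finset.range (T / τ Y) \ E Y) M
      ≤ (Finset.range (T / τ Y) \ E Y).card := by
    have := hM3; unfold fterm at this; omega
  have hfilter : ct τ Y (Finset.range (T / τ Y) \ E Y) M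
      + ((Finset.range (T / τ Y) \ E Y).filter fun p => ¬ per τ Y p ⊆ M).card
      = (Finset.range (T / τ Y) \ E Y).card := by
    unfold ct
    exact Finset.card_filter_add_card_filter_not _
  have hnonempty : 0 < ((Finset.range (T / τ Y) \ E Y).filter fun p => ¬ per τ Y p ⊆ M).card := by
    omega
  obtain ⟨p, hp⟩ := Finset.card_pos.1 hnonempty
  have hpF : p ∈ Finset.range (T / τ Y) \ E Y := (Finset.mem_filter.1 hp).1
  have hpM : ¬ per τ Y p ⊆ M := (Finset.mem_filter.1 hp).2
  have hprange : p ∈ Finset.range (T / τ Y) := (Finset.mem_sdiff.1 hpF).1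
  have hpEY : p ∉ E Y := (Finset.mem_sdiff.1 hpF).2
  refine ⟨p, hprange, hpEY, ?_⟩
  intro A hA
  -- notation
  set F : Finset ℕ := Finset.range (T / τ Y) \ E Y with hF
  have hpF' : p ∈ F := hpF
  have hk1 : 1 ≤ F.card := Finset.card_pos.2 ⟨p, hpF'⟩
  have hF' : Finset.range (T / τ Y) \ insert p (E Y) = F.erase p := by
    rw [hF]
    ext x
    simp only [Finset.mem_sdiff, Finset.mem_insert, Finset.mem_erase]
    tauto
  have hcardF' : (F.erase p).card = F.card - 1 := Finset.card_erase_of_mem hpF'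
  set E' := Function.update E Y (insert p (E Y)) with hE'
  set R' := Function.update R Y (R Y - 1) with hR'
  have hEY' : E' Y = insert p (E Y) := Function.update_self _ _ _
  have hRY' : R' Y = R Y - 1 := Function.update_self _ _ _
  have hsplit : ∀ (G : S → Finset ℕ) (Rf : S → ℕ),
      Dm τ T c G Rf A = demX τ T c (G Y) (Rf Y) Y A
        + ∑ X ∈ Finset.univ.erase Y, demX τ T c (G X) (Rf X) X A := by
    intro G Rf
    exact (Finset.add_sum_erase _ _ (Finset.mem_univ Y)).symm
  have hrest : ∑ X ∈ Finset.univ.erase Y, demX τ T c (E' X) (R' X) X A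
      = ∑ X ∈ Finset.univ.erase Y, demX τ T c (E X) (R X) X A := by
    apply Finset.sum_congr rfl
    intro X hX
    have hXY : X ≠ Y := (Finset.mem_erase.1 hX).1
    rw [hE', hR', Function.update_of_ne hXY, Function.update_of_ne hXY]
  have hctE' : ct τ Y (insert p (E Y)) A
      = ct τ Y (E Y) A + (if per τ Y p ⊆ A then 1 else 0) := by
    unfold ct
    rw [Finset.filter_insert]
    by_cases hps : per τ Y p ⊆ A
    · rw [if_pos hps, if_pos hps, Finset.card_insert_of_notMem
        (fun hmem => hpEY (Finset.mem_filter.1 hmem).1)]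
    · rw [if_neg hps, if_neg hps, add_zero]
  have hctF' : ct τ Y (F.erase p) A
      = ct τ Y F A - (if per τ Y p ⊆ A then 1 else 0) := by
    unfold ct
    rw [Finset.filter_erase]
    by_cases hps : per τ Y p ⊆ A
    · rw [if_pos hps, Finset.card_erase_of_mem (Finset.mem_filter.2 ⟨hpF', hps⟩)]
    · rw [if_neg hps]
      have hpnot : p ∉ F.filter fun p => per τ Y p ⊆ A :=
        fun hmem => hps (Finset.mem_filter.1 hmem).2
      rw [Finset.erase_eq_of_notMem hpnot, Nat.sub_zero]
  have hinvA := hinv A hA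
  rw [hsplit E R] at hinvA
  rw [hsplit E' R', hEY', hRY', hrest]
  unfold demX fterm
  rw [hF', hctE', hctF', hcardF']
  unfold demX fterm at hinvA
  rw [← hF] at hinvA
  by_cases hps : per τ Y p ⊆ A
  · rw [if_pos hps]
    have hctF1 : 1 ≤ ct τ Y F A :=
      Finset.card_pos.2 ⟨p, Finset.mem_filter.2 ⟨hpF', hps⟩⟩
    by_cases htight : Dm τ T c E R A = A.card
    · have hf1 : 1 ≤ fterm τ T (E Y) (R Y) Y A := by
        by_contra h0
        push_neg at h0
        have h00 : fterm τ T (E Y) (R Y) Y A = 0 := by omega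
        have hmem : A ∈ 𝒜 := by
          rw [h𝒜]
          exact Finset.mem_filter.2 ⟨Finset.mem_powerset.2 hA, htight, h00⟩
        have hAM : A ⊆ M := by
          have := Finset.le_sup (f := id) hmem
          simpa using this
        exact hpM (hps.trans hAM)
      rw [hsplit E R] at htight
      unfold demX fterm at htight
      rw [← hF] at htight
      unfold fterm at hf1
      rw [← hF] at hf1
      omega
    · have hlt : Dm τ T c E R A + 1 ≤ A.card := by
        have := hinv A hA
        omega
      rw [hsplit E R] at hlt
      unfold demX fterm at hlt
      rw [← hF] at hlt
      omega
  · rw [if_neg hps]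
    omega

/-! ## Iterating the step -/

lemma inv_reach (τ : S → ℕ) (T : ℕ) (c : S → ℕ) :
    ∀ (N : ℕ) (E : S → Finset ℕ) (R : S → ℕ),
      (∑ X : S, R X = N) → (∀ X, E X ⊆ Finset.range (T / τ X)) → INV τ T c E R →
      ∃ E' : S → Finset ℕ, (∀ X, E' X ⊆ Finset.range (T / τ X)) ∧
        (∀ X, (E' X).card = (E X).card + R X) ∧ INV τ T c E' (fun _ => 0) := by
  intro N
  induction N with
  | zero =>
    intro E R hsum hE hinv
    have hR0 : ∀ X, R X = 0 := by
      intro X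
      exact Finset.sum_eq_zero_iff.1 hsum X (Finset.mem_univ X)
    refine ⟨E, hE, fun X => by simp [hR0 X], ?_⟩
    have hRR : (fun _ : S => 0) = R := funext fun X => (hR0 X).symm
    rw [hRR]
    exact hinv
  | succ N ih =>
    intro E R hsum hE hinv
    have hY : ∃ Y, R Y ≠ 0 := by
      by_contra h
      push_neg at h
      simp [h] at hsum
    obtain ⟨Y, hY⟩ := hY
    obtain ⟨p, hpr, hpE, hinv'⟩ := inv_step τ T c E R hE hinv Y (by omega)
    have hE'sub : ∀ X, Function.update E Y (insert p (E Y)) X ⊆ Finset.range (T / τ X) := by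
      intro X
      by_cases hXY : X = Y
      · subst hXY
        rw [Function.update_self]
        exact Finset.insert_subset hpr (hE X)
      · rw [Function.update_of_ne hXY]
        exact hE X
    have hsum' : ∑ X : S, Function.update R Y (R Y - 1) X = N := by
      rw [Finset.sum_update_of_mem (Finset.mem_univ Y)]
      rw [← Finset.add_sum_erase _ R (Finset.mem_univ Y)] at hsum
      rw [← Finset.sdiff_singleton_eq_erase] at hsum
      omega
    obtain ⟨E', h1, h2, h3⟩ := ih _ _ hsum' hE'sub hinv'
    refine ⟨E', h1, ?_, h3⟩
    intro X
    by_cases hXY : X = Y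
    · subst hXY
      have hc2 := h2 X
      rw [Function.update_self, Function.update_self,
        Finset.card_insert_of_notMem hpE] at hc2
      omega
    · have hc2 := h2 X
      rwa [Function.update_of_ne hXY, Function.update_of_ne hXY] at hc2

/-! ## Existence of balanced marks -/

theorem exists_marks (τ : S → ℕ) (T : ℕ) (c : S → ℕ)
    (hτ : ∀ X, 0 < τ X) (hdvd : ∀ X, τ X ∣ T) (hT : 0 < T)
    (hc : ∑ X : S, c X ≤ T) :
    ∃ E : S → Finset ℕ, (∀ X, E X ⊆ Finset.range (T / τ X)) ∧
      (∀ X, (E X).card = c X % (T / τ X)) ∧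
      ∀ A : Finset ℕ, A ⊆ Finset.range T →
        (∑ X : S, ((c X / (T / τ X)) * ct τ X (Finset.range (T / τ X)) A
          + ct τ X (E X) A)) ≤ A.card := by
  obtain ⟨E', h1, h2, h3⟩ := inv_reach τ T c (∑ X : S, c X % (T / τ X)) (fun _ => ∅)
    (fun X => c X % (T / τ X)) rfl (fun X => Finset.empty_subset _)
    (inv_init τ T c hτ hdvd hT hc)
  refine ⟨E', h1, fun X => by simpa using h2 X, ?_⟩
  intro A hA
  have hD := h3 A hA
  unfold Dm at hD
  calc (∑ X : S, ((c X / (T / τ X)) * ct τ X (Finset.range (T / τ X)) A + ct τ X (E' X) A))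
      ≤ ∑ X : S, demX τ T c (E' X) 0 X A := by
        apply Finset.sum_le_sum
        intro X _
        unfold demX
        omega
    _ ≤ A.card := hD


/-! ## From marks to a schedule, via Hall's theorem -/

theorem exists_sigma (τ : S → ℕ) (T : ℕ) (c : S → ℕ)
    (hτ : ∀ X, 0 < τ X) (hdvd : ∀ X, τ X ∣ T)
    (E : S → Finset ℕ) (hEsub : ∀ X, E X ⊆ Finset.range (T / τ X))
    (hDF : ∀ A : Finset ℕ, A ⊆ Finset.range T →
      (∑ X : S, ((c X / (T / τ X)) * ct τ X (Finset.range (T / τ X)) A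
        + ct τ X (E X) A)) ≤ A.card) :
    ∃ σ : ℕ → Option S, ∀ X : S, ∀ p, p < T / τ X →
      c X / (T / τ X) + (if p ∈ E X then 1 else 0)
        ≤ ((Finset.Ico (p * τ X) ((p + 1) * τ X)).filter fun t => σ t = some X).card := by
  classical
  set m : (X : S) → ℕ → ℕ := fun X p => c X / (T / τ X) + (if p ∈ E X then 1 else 0) with hm
  have hall : ∀ s : Finset ((X : S) × (p : Fin (T / τ X)) × Fin (m X p.val)),
      s.card ≤ (s.biUnion fun i => per τ i.1 i.2.1.val).card := by
    intro s
    set A := s.biUnion fun i => per τ i.1 i.2.1.val with hAdef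
    have hA : A ⊆ Finset.range T := by
      intro x hx
      rcases Finset.mem_biUnion.1 hx with ⟨i, _, hxi⟩
      rcases Finset.mem_Ico.1 hxi with ⟨_, hlt⟩
      have h1 : (i.2.1.val + 1) * τ i.1 ≤ (T / τ i.1) * τ i.1 :=
        Nat.mul_le_mul_right _ i.2.1.isLt
      have h2 : (T / τ i.1) * τ i.1 ≤ T := Nat.div_mul_le_self _ _
      exact Finset.mem_range.2 (by omega)
    have hsub : s ⊆ Finset.univ.filter
        (fun i : (X : S) × (p : Fin (T / τ X)) × Fin (m X p.val) => per τ i.1 i.2.1.val ⊆ A) := by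
      intro i hi
      refine Finset.mem_filter.2 ⟨Finset.mem_univ _, ?_⟩
      exact Finset.subset_biUnion_of_mem
        (fun i : (X : S) × (p : Fin (T / τ X)) × Fin (m X p.val) => per τ i.1 i.2.1.val) hi
    have hcardB : (Finset.univ.filter
        (fun i : (X : S) × (p : Fin (T / τ X)) × Fin (m X p.val) => per τ i.1 i.2.1.val ⊆ A)).card
        = ∑ X : S, ((c X / (T / τ X)) * ct τ X (Finset.range (T / τ X)) A
            + ct τ X (E X) A) := by
      rw [Finset.card_filter]
      have huniv1 : (Finset.univ : Finset ((X : S) × (p : Fin (T / τ X)) × Fin (m X p.val)))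
          = (Finset.univ : Finset S).sigma
              (fun X => (Finset.univ : Finset ((p : Fin (T / τ X)) × Fin (m X p.val)))) :=
        Finset.univ_sigma_univ.symm
      rw [huniv1, Finset.sum_sigma]
      refine Finset.sum_congr rfl fun X _ => ?_
      have huniv2 : (Finset.univ : Finset ((p : Fin (T / τ X)) × Fin (m X p.val)))
          = (Finset.univ : Finset (Fin (T / τ X))).sigma
              (fun p => (Finset.univ : Finset (Fin (m X p.val)))) :=
        Finset.univ_sigma_univ.symm
      rw [huniv2, Finset.sum_sigma]
      have hstep : ∀ p : Fin (T / τ X),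
          (∑ _j : Fin (m X p.val), if per τ X p.val ⊆ A then 1 else 0)
            = if per τ X p.val ⊆ A then m X p.val else 0 := by
        intro p
        by_cases hps : per τ X p.val ⊆ A <;> simp [hps]
      rw [Finset.sum_congr rfl fun p _ => hstep p]
      rw [Fin.sum_univ_eq_sum_range (fun p => if per τ X p ⊆ A then m X p else 0)]
      rw [← Finset.sum_filter]
      set Q := (Finset.range (T / τ X)).filter (fun p => per τ X p ⊆ A) with hQ
      have hsplit : ∑ p ∈ Q, m X p
          = (c X / (T / τ X)) * ct τ X (Finset.range (T / τ X)) A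
            + ∑ p ∈ Q, (if p ∈ E X then 1 else 0) := by
        rw [hm]
        rw [Finset.sum_add_distrib, Finset.sum_const]
        have hQct : Q.card = ct τ X (Finset.range (T / τ X)) A := rfl
        rw [smul_eq_mul, hQct, mul_comm]
      rw [hsplit]
      congr 1
      have h1 : ∑ p ∈ Q, (if p ∈ E X then 1 else 0) = (Q.filter (· ∈ E X)).card :=
        (Finset.card_filter _ _).symm
      have h2 : Q.filter (· ∈ E X) = (E X).filter (fun p => per τ X p ⊆ A) := by
        ext p
        simp only [hQ, Finset.mem_filter, Finset.mem_range]
        constructor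
        · rintro ⟨⟨_, hpA⟩, hpE⟩
          exact ⟨hpE, hpA⟩
        · rintro ⟨hpE, hpA⟩
          exact ⟨⟨Finset.mem_range.1 (hEsub X hpE), hpA⟩, hpE⟩
      rw [h1, h2]
      rfl
    calc s.card ≤ (Finset.univ.filter
        (fun i : (X : S) × (p : Fin (T / τ X)) × Fin (m X p.val) =>
          per τ i.1 i.2.1.val ⊆ A)).card := Finset.card_le_card hsub
      _ = ∑ X : S, ((c X / (T / τ X)) * ct τ X (Finset.range (T / τ X)) A
            + ct τ X (E X) A) := hcardB
      _ ≤ A.card := hDF A hA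
  obtain ⟨f, hfinj, hfmem⟩ :=
    (Finset.all_card_le_biUnion_card_iff_exists_injective
      (fun i : (X : S) × (p : Fin (T / τ X)) × Fin (m X p.val) => per τ i.1 i.2.1.val)).1 hall
  refine ⟨fun n => if h : ∃ i : (X : S) × (p : Fin (T / τ X)) × Fin (m X p.val), f i = n
      then some (Classical.choose h).1 else none, ?_⟩
  intro X p hp
  set σ : ℕ → Option S := fun n =>
    if h : ∃ i : (X : S) × (p : Fin (T / τ X)) × Fin (m X p.val), f i = n
    then some (Classical.choose h).1 else none with hσ
  show m X p ≤ _
  have hg : ∀ j : Fin (m X p), f ⟨X, ⟨p, hp⟩, (by exact j)⟩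
      ∈ (Finset.Ico (p * τ X) ((p + 1) * τ X)).filter fun t => σ t = some X := by
    intro j
    set i₀ : (X : S) × (p : Fin (T / τ X)) × Fin (m X p.val) := ⟨X, ⟨p, hp⟩, j⟩ with hi₀
    refine Finset.mem_filter.2 ⟨hfmem i₀, ?_⟩
    have hex : ∃ i : (X : S) × (p : Fin (T / τ X)) × Fin (m X p.val), f i = f i₀ := ⟨i₀, rfl⟩
    have : σ (f i₀) = some (Classical.choose hex).1 := by
      rw [hσ]; exact dif_pos hex
    rw [this]
    have hchoose : (Classical.choose hex) = i₀ := hfinj (Classical.choose_spec hex)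
    rw [hchoose]
  have hinjg : Set.InjOn (fun j : Fin (m X p) => f ⟨X, ⟨p, hp⟩, j⟩)
      (Finset.univ : Finset (Fin (m X p))) := by
    intro a _ b _ hab
    have h := hfinj hab
    have h2 := congrArg
      (fun i : (X : S) × (p : Fin (T / τ X)) × Fin (m X p.val) => i.2.2.val) h
    exact Fin.val_injective h2
  calc m X p = (Finset.univ : Finset (Fin (m X p))).card := by simp
    _ ≤ _ := Finset.card_le_card_of_injOn _ (fun j _ => hg j) hinjg


/-! ## Abel-type comparison -/

lemma r_chain (t : ℕ) (r : ℕ → ℝ) (hra : ∀ i, 1 ≤ i → i + 1 ≤ t → r (i + 1) ≤ r i) :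
    ∀ i j, 1 ≤ i → i ≤ j → j ≤ t → r j ≤ r i := by
  intro i j h1 hij
  induction j, hij using Nat.le_induction with
  | base => intro _; exact le_refl _
  | succ j hij ih =>
    intro hjt
    have h2 : r (j + 1) ≤ r j := hra j (le_trans h1 hij) hjt
    exact h2.trans (ih (by omega))

lemma abel_compare : ∀ (t : ℕ) (r : ℕ → ℝ) (a n : ℕ → ℕ),
    (∀ i, 1 ≤ i → i ≤ t → 0 ≤ r i) →
    (∀ i, 1 ≤ i → i + 1 ≤ t → r (i + 1) ≤ r i) →
    (∀ i ∈ Finset.Icc 1 t, ∑ i' ∈ Finset.Icc 1 i, n i' ≤ ∑ i' ∈ Finset.Icc 1 i, a i') →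
    ∑ i ∈ Finset.Icc 1 t, (n i : ℝ) * r i ≤ ∑ i ∈ Finset.Icc 1 t, (a i : ℝ) * r i := by
  intro t
  induction t with
  | zero => intro r a n _ _ _; simp
  | succ t ih =>
    intro r a n hr0 hra hdom
    set r' : ℕ → ℝ := fun i => r i - r (t + 1) with hr'
    have hchain := r_chain (t + 1) r hra
    have hr0' : ∀ i, 1 ≤ i → i ≤ t → 0 ≤ r' i := by
      intro i h1 h2
      have := hchain i (t + 1) h1 (by omega) (le_refl _)
      simp only [hr']
      linarith
    have hra' : ∀ i, 1 ≤ i → i + 1 ≤ t → r' (i + 1) ≤ r' i := by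
      intro i h1 h2
      have := hra i h1 (by omega)
      simp only [hr']
      linarith
    have hdom' : ∀ i ∈ Finset.Icc 1 t, ∑ i' ∈ Finset.Icc 1 i, n i' ≤ ∑ i' ∈ Finset.Icc 1 i, a i' := by
      intro i hi
      rcases Finset.mem_Icc.1 hi with ⟨hi1, hi2⟩
      exact hdom i (Finset.mem_Icc.2 ⟨hi1, by omega⟩)
    have key := ih r' a n hr0' hra' hdom'
    have expand : ∀ g : ℕ → ℕ, ∑ i ∈ Finset.Icc 1 (t + 1), (g i : ℝ) * r i
        = ∑ i ∈ Finset.Icc 1 t, (g i : ℝ) * r' i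
          + (∑ i ∈ Finset.Icc 1 (t + 1), (g i : ℝ)) * r (t + 1) := by
      intro g
      have h1 : ∑ i ∈ Finset.Icc 1 (t + 1), (g i : ℝ) * r i
          = ∑ i ∈ Finset.Icc 1 (t + 1), ((g i : ℝ) * r' i + (g i : ℝ) * r (t + 1)) := by
        refine Finset.sum_congr rfl fun i _ => ?_
        simp only [hr']
        ring
      rw [h1, Finset.sum_add_distrib, ← Finset.sum_mul]
      congr 1
      rw [Finset.sum_Icc_succ_top (by omega : 1 ≤ t + 1)]
      simp [hr']
    rw [expand n, expand a]
    have hdt := hdom (t + 1) (Finset.mem_Icc.2 ⟨by omega, le_refl _⟩)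
    have hnle : (∑ i ∈ Finset.Icc 1 (t + 1), (n i : ℝ)) ≤ ∑ i ∈ Finset.Icc 1 (t + 1), (a i : ℝ) := by
      exact_mod_cast hdt
    have hrt : 0 ≤ r (t + 1) := hr0 (t + 1) (by omega) (le_refl _)
    have hmul := mul_le_mul_of_nonneg_right hnle hrt
    linarith

end RewardSched

/-- The number of time slots `t` in the `p`-th period of task `X` (the
interval `[p·τ_X, (p+1)·τ_X)`) at which the schedule `σ` executes `X`. -/
def execCount {S : Type*} [DecidableEq S] (τ : S → ℕ) (σ : ℕ → Option S)
    (X : S) (p : ℕ) : ℕ :=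
  ((Finset.Ico (p * τ X) ((p + 1) * τ X)).filter (fun t => σ t = some X)).card

/-- Theorem 3 of the paper.  If `n_X^i` are nonnegative
integers with `n_X^i ≤ T/τ_X` and `Σ_X Σ_i n_X^i ≤ T`, then there is a
schedule of one frame under which every task `X` earns reward at least
`Σ_{i=1}^{τ_X} n_X^i r_X^i`. -/
theorem exists_schedule_of_integer_point
    {S : Type*} [Fintype S] [Nonempty S] [DecidableEq S]
    (τ : S → ℕ) (hτ : ∀ X, 0 < τ X)
    (T : ℕ) (hT : T = Finset.univ.lcm τ)
    (r : S → ℕ → ℝ)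
    (hr_nonneg : ∀ X, ∀ i ∈ Finset.Icc 1 (τ X), 0 ≤ r X i)
    (hr_anti : ∀ X, ∀ i, 1 ≤ i → i + 1 ≤ τ X → r X (i + 1) ≤ r X i)
    (n : S → ℕ → ℕ)
    (hn_le : ∀ X, ∀ i ∈ Finset.Icc 1 (τ X), n X i ≤ T / τ X)
    (hn_sum : ∑ X : S, ∑ i ∈ Finset.Icc 1 (τ X), n X i ≤ T) :
    ∃ σ : ℕ → Option S, ∀ X : S,
      ∑ i ∈ Finset.Icc 1 (τ X), (n X i : ℝ) * r X i ≤
        ∑ p ∈ Finset.range (T / τ X),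
          ∑ i ∈ Finset.Icc 1 (execCount τ σ X p), r X i := by
  classical
  set c : S → ℕ := fun X => ∑ i ∈ Finset.Icc 1 (τ X), n X i with hc
  have hdvd : ∀ X, τ X ∣ T := fun X => hT ▸ Finset.dvd_lcm (Finset.mem_univ X)
  have hT0 : 0 < T := by
    rcases Nat.eq_zero_or_pos T with h | h
    · exfalso
      rw [h] at hT
      have h0 : (0 : ℕ) ∈ τ '' (Finset.univ : Finset S) :=
        Finset.lcm_eq_zero_iff.1 hT.symm
      obtain ⟨X, _, hX0⟩ := h0
      have := hτ X
      omega
    · exact h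
  obtain ⟨E, hE1, hE2, hE3⟩ := RewardSched.exists_marks τ T c hτ hdvd hT0 hn_sum
  obtain ⟨σ, hσ⟩ := RewardSched.exists_sigma τ T c hτ hdvd E hE1 hE3
  refine ⟨σ, fun X => ?_⟩
  set P := T / τ X with hP
  set β := c X / P with hβ
  have hP0 : 0 < P := Nat.div_pos (Nat.le_of_dvd hT0 (hdvd X)) (hτ X)
  have hcτP : c X ≤ τ X * P := by
    calc c X = ∑ i ∈ Finset.Icc 1 (τ X), n X i := rfl
      _ ≤ ∑ _i ∈ Finset.Icc 1 (τ X), P := Finset.sum_le_sum (hn_le X)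
      _ = τ X * P := by simp [Nat.card_Icc, mul_comm]
  have hβτ : β ≤ τ X := by
    calc β = c X / P := rfl
      _ ≤ τ X * P / P := Nat.div_le_div_right hcτP
      _ = τ X := Nat.mul_div_cancel _ hP0
  set mm : ℕ → ℕ := fun p => β + (if p ∈ E X then 1 else 0) with hmm
  set ex : ℕ → ℕ := fun p => execCount τ σ X p with hexdef
  have hmm_le : ∀ p ∈ Finset.range P, mm p ≤ ex p := by
    intro p hp
    exact hσ X p (Finset.mem_range.1 hp)
  have hex_le : ∀ p, ex p ≤ τ X := by
    intro p
    calc ex p ≤ (Finset.Ico (p * τ X) ((p + 1) * τ X)).card :=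
          Finset.card_le_card (Finset.filter_subset _ _)
      _ = τ X := by rw [Nat.card_Ico]; ring_nf; omega
  set a : ℕ → ℕ := fun i => ((Finset.range P).filter fun p => i ≤ ex p).card with ha
  -- swap lemma
  have claim1 : ∑ p ∈ Finset.range P, ∑ i ∈ Finset.Icc 1 (ex p), r X i
      = ∑ i ∈ Finset.Icc 1 (τ X), (a i : ℝ) * r X i := by
    have h1 : ∀ p ∈ Finset.range P, ∑ i ∈ Finset.Icc 1 (ex p), r X i
        = ∑ i ∈ Finset.Icc 1 (τ X), if i ≤ ex p then r X i else 0 := by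
      intro p _
      rw [← Finset.sum_filter]
      congr 1
      ext i
      simp only [Finset.mem_Icc, Finset.mem_filter]
      have := hex_le p
      omega
    rw [Finset.sum_congr rfl h1, Finset.sum_comm]
    refine Finset.sum_congr rfl fun i _ => ?_
    rw [← Finset.sum_filter, Finset.sum_const, ha]
    simp [mul_comm]
  -- dominance
  have claim2 : ∀ i ∈ Finset.Icc 1 (τ X),
      ∑ i' ∈ Finset.Icc 1 i, n X i' ≤ ∑ i' ∈ Finset.Icc 1 i, a i' := by
    intro i hi
    rcases Finset.mem_Icc.1 hi with ⟨hi1, hi2⟩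
    have hswap : ∑ i' ∈ Finset.Icc 1 i, a i' = ∑ p ∈ Finset.range P, min i (ex p) := by
      have h1 : ∀ i' ∈ Finset.Icc 1 i, a i'
          = ∑ p ∈ Finset.range P, if i' ≤ ex p then 1 else 0 := by
        intro i' _
        rw [ha]
        exact Finset.card_filter _ _
      rw [Finset.sum_congr rfl h1, Finset.sum_comm]
      refine Finset.sum_congr rfl fun p _ => ?_
      rw [← Finset.sum_filter]
      have h2 : (Finset.Icc 1 i).filter (fun i' => i' ≤ ex p) = Finset.Icc 1 (min i (ex p)) := by
        ext i'
        simp only [Finset.mem_Icc, Finset.mem_filter]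
        omega
      rw [h2]
      simp [Nat.card_Icc]
    rw [hswap]
    rcases le_or_gt i β with hiβ | hiβ
    · -- i ≤ β : each min = i
      have h1 : ∀ p ∈ Finset.range P, min i (ex p) = i := by
        intro p hp
        have h2 := hmm_le p hp
        have h3 : β ≤ mm p := Nat.le_add_right _ _
        omega
      rw [Finset.sum_congr rfl h1, Finset.sum_const, smul_eq_mul, Finset.card_range]
      calc ∑ i' ∈ Finset.Icc 1 i, n X i' ≤ ∑ _i' ∈ Finset.Icc 1 i, P := by
            apply Finset.sum_le_sum
            intro i' hi'
            rcases Finset.mem_Icc.1 hi' with ⟨h3, h4⟩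
            exact hn_le X i' (Finset.mem_Icc.2 ⟨h3, by omega⟩)
        _ = i * P := by simp [Nat.card_Icc, mul_comm]
        _ = P * i := by ring
    · -- β < i : Σ min ≥ Σ mm = c X
      have h1 : ∑ p ∈ Finset.range P, mm p ≤ ∑ p ∈ Finset.range P, min i (ex p) := by
        apply Finset.sum_le_sum
        intro p hp
        have h2 := hmm_le p hp
        have hite : (if p ∈ E X then 1 else 0) ≤ 1 := by split <;> omega
        have h3 : mm p ≤ β + 1 := add_le_add_right hite β
        omega
      have h2 : ∑ p ∈ Finset.range P, mm p = c X := by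
        rw [hmm]
        rw [Finset.sum_add_distrib, Finset.sum_const, Finset.card_range, smul_eq_mul]
        have h3 : ∑ p ∈ Finset.range P, (if p ∈ E X then 1 else 0) = (E X).card := by
          rw [← Finset.card_filter]
          congr 1
          rw [Finset.filter_mem_eq_inter]
          exact Finset.inter_eq_right.2 (hE1 X)
        rw [h3, hE2 X]
        exact Nat.div_add_mod _ _
      have h4 : ∑ i' ∈ Finset.Icc 1 i, n X i' ≤ c X := by
        rw [hc]
        apply Finset.sum_le_sum_of_subset
        intro i' hi'
        rcases Finset.mem_Icc.1 hi' with ⟨h5, h6⟩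
        exact Finset.mem_Icc.2 ⟨h5, by omega⟩
      omega
  have habel := RewardSched.abel_compare (τ X) (r X) a (n X)
    (fun i h1 h2 => hr_nonneg X i (Finset.mem_Icc.2 ⟨h1, h2⟩))
    (hr_anti X) claim2
  calc ∑ i ∈ Finset.Icc 1 (τ X), (n X i : ℝ) * r X i
      ≤ ∑ i ∈ Finset.Icc 1 (τ X), (a i : ℝ) * r X i := habel
    _ = ∑ p ∈ Finset.range P, ∑ i ∈ Finset.Icc 1 (ex p), r X i := claim1.symm
    _ = ∑ p ∈ Finset.range (T / τ X), ∑ i ∈ Finset.Icc 1 (execCount τ σ X p), r X i := rfl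
end

section
/- For every greedy frame schedule σ_GM and every frame schedule σ, Σ_{X∈S} d_X R_X(σ_GM) ≥ (1/2) Σ_{X∈S} d_X R_X(σ). That is, the greedy schedule earns at least half of the maximum achievable debt-weighted reward in each frame (hence the Greedy Maximizer is a 2-approximation policy). -/
/-- The reward of task `X` under a frame schedule `σ`:
`R_X(σ) = Σ_{p=0}^{T/τ_X − 1} Σ_{i=1}^{m_X(p)} r_X^i`. -/
def reward {S : Type*} [DecidableEq S] (τ : S → ℕ) (T : ℕ) (r : S → ℕ → ℝ)
    (σ : ℕ → Option S) (X : S) : ℝ :=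
  ∑ p ∈ Finset.range (T / τ X), ∑ i ∈ Finset.Icc 1 (execCount τ σ X p), r X i

/-- The number of executions of `Y` before slot `t` in the current period of
`Y` containing `t`, i.e. `#{t' ∈ [⌊t/τ_Y⌋·τ_Y, t) : σ(t') = Y}`. -/
def execsSoFar {S : Type*} [DecidableEq S] (τ : S → ℕ) (σ : ℕ → Option S)
    (Y : S) (t : ℕ) : ℕ :=
  ((Finset.Ico ((t / τ Y) * τ Y) t).filter (fun t' => σ t' = some Y)).card

namespace GreedyAux

open Finset

/-- Rank-sum lemma: summing `f (rank t)` over a finset of naturals equals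
summing `f i` over `range card`. -/
lemma rank_sum (f : ℕ → ℝ) (s : Finset ℕ) :
    ∑ t ∈ s, f ((s.filter (· < t)).card) = ∑ i ∈ Finset.range s.card, f i := by
  induction s using Finset.strongInduction with
  | _ s ih =>
    rcases s.eq_empty_or_nonempty with rfl | hs
    · simp
    · have hMs : s.max' hs ∈ s := s.max'_mem hs
      set M := s.max' hs with hM
      have hfilt : s.filter (· < M) = s.erase M := by
        ext a
        simp only [mem_filter, mem_erase]
        constructor
        · rintro ⟨ha, hlt⟩; exact ⟨ne_of_lt hlt, ha⟩
        · rintro ⟨hne, ha⟩; exact ⟨ha, lt_of_le_of_ne (s.le_max' a ha) hne⟩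
      have hkey : ∀ t ∈ s.erase M, (s.filter (· < t)).card
          = ((s.erase M).filter (· < t)).card := by
        intro t ht
        rw [filter_erase, Finset.erase_eq_of_notMem]
        simp only [mem_filter, not_and, not_lt]
        intro _
        exact s.le_max' t (mem_of_mem_erase ht)
      have hcard : s.card = (s.erase M).card + 1 := by
        rw [card_erase_of_mem hMs]
        have := Finset.card_pos.mpr hs
        omega
      rw [← Finset.add_sum_erase _ _ hMs, hfilt,
        Finset.sum_congr rfl (fun t ht => by rw [hkey t ht]),
        ih (s.erase M) (Finset.erase_ssubset hMs), hcard,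
        Finset.sum_range_succ]
      ring

/-- Splitting a sum over `range (q*c)` into periods. -/
lemma sum_range_mul (f : ℕ → ℝ) (c : ℕ) (q : ℕ) :
    ∑ t ∈ Finset.range (q * c), f t
      = ∑ p ∈ Finset.range q, ∑ t ∈ Finset.Ico (p * c) ((p + 1) * c), f t := by
  induction q with
  | zero => simp
  | succ q ih =>
    rw [Finset.sum_range_succ, ← ih]
    simp only [Finset.range_eq_Ico]
    exact (Finset.sum_Ico_consecutive f (Nat.zero_le (q * c))
      (Nat.mul_le_mul_right c (Nat.le_succ q))).symm

variable {S : Type*} [Fintype S] [DecidableEq S]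

lemma div_eq_of_period {τ : ℕ} (p t : ℕ) (h1 : p * τ ≤ t) (h2 : t < (p + 1) * τ) :
    t / τ = p := Nat.div_eq_of_lt_le h1 h2

/-- In a period, `execsSoFar` is the rank within the executed-slot set. -/
lemma execsSoFar_eq_rank (τ : S → ℕ) (σ : ℕ → Option S) (Z : S) (p t : ℕ)
    (h1 : p * τ Z ≤ t) (h2 : t < (p + 1) * τ Z) :
    execsSoFar τ σ Z t =
      (((Finset.Ico (p * τ Z) ((p + 1) * τ Z)).filter
        (fun t' => σ t' = some Z)).filter (· < t)).card := by
  unfold execsSoFar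
  rw [div_eq_of_period p t h1 h2]
  congr 1
  ext a
  simp only [mem_filter, mem_Ico]
  constructor
  · rintro ⟨⟨ha1, ha2⟩, ha3⟩
    exact ⟨⟨⟨ha1, lt_of_lt_of_le ha2 (le_of_lt h2)⟩, ha3⟩, ha2⟩
  · rintro ⟨⟨⟨ha1, _⟩, ha3⟩, ha4⟩
    exact ⟨⟨ha1, ha4⟩, ha3⟩

/-- Structural lemma: a slot-indexed sum of the form
`F (task) (period) (execsSoFar+1)` regroups into a task/period/index sum. -/
lemma slot_sum (τ : S → ℕ) (T : ℕ) (hdvd : ∀ X, τ X ∣ T)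
    (σ : ℕ → Option S) (F : S → ℕ → ℕ → ℝ) :
    ∑ t ∈ Finset.range T,
        (σ t).elim 0 (fun Z => F Z (t / τ Z) (execsSoFar τ σ Z t + 1))
      = ∑ X : S, ∑ p ∈ Finset.range (T / τ X),
          ∑ k ∈ Finset.Icc 1 (execCount τ σ X p), F X p k := by
  have hpt : ∀ t, (σ t).elim 0 (fun Z => F Z (t / τ Z) (execsSoFar τ σ Z t + 1))
      = ∑ X : S, if σ t = some X then F X (t / τ X) (execsSoFar τ σ X t + 1)
          else 0 := by
    intro t
    cases h : σ t with
    | none => simp [h]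
    | some Z => simp [h]
  rw [Finset.sum_congr rfl (fun t _ => hpt t), Finset.sum_comm]
  refine Finset.sum_congr rfl (fun X _ => ?_)
  have hT : T = (T / τ X) * τ X := (Nat.div_mul_cancel (hdvd X)).symm
  conv_lhs => rw [hT]
  rw [sum_range_mul]
  refine Finset.sum_congr rfl (fun p _ => ?_)
  rw [← Finset.sum_filter]
  have hstep : ∀ t ∈ (Finset.Ico (p * τ X) ((p + 1) * τ X)).filter
      (fun t => σ t = some X),
      F X (t / τ X) (execsSoFar τ σ X t + 1)
      = (fun k => F X p (k + 1))
        ((((Finset.Ico (p * τ X) ((p + 1) * τ X)).filter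
          (fun t' => σ t' = some X)).filter (· < t)).card) := by
    intro t ht
    simp only [mem_filter, mem_Ico] at ht
    rw [div_eq_of_period p t ht.1.1 ht.1.2,
      execsSoFar_eq_rank τ σ X p t ht.1.1 ht.1.2]
  rw [Finset.sum_congr rfl hstep,
    rank_sum (fun k => F X p (k + 1))
      ((Finset.Ico (p * τ X) ((p + 1) * τ X)).filter (fun t' => σ t' = some X))]
  unfold execCount
  rw [← Finset.Ico_add_one_right_eq_Icc, Finset.sum_Ico_eq_sum_range]
  simp [add_comm]

/-- `execsSoFar` never exceeds the full-period execution count. -/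
lemma execsSoFar_le_execCount (τ : S → ℕ) (hτ : ∀ X, 0 < τ X)
    (σ : ℕ → Option S) (Z : S) (t : ℕ) :
    execsSoFar τ σ Z t ≤ execCount τ σ Z (t / τ Z) := by
  unfold execsSoFar execCount
  apply Finset.card_le_card
  apply Finset.filter_subset_filter
  apply Finset.Ico_subset_Ico le_rfl
  rw [add_mul, one_mul]
  have h1 : τ Z * (t / τ Z) + t % τ Z = t := Nat.div_add_mod t (τ Z)
  have h2 := Nat.mod_lt t (hτ Z)
  have h3 : τ Z * (t / τ Z) = t / τ Z * τ Z := mul_comm _ _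
  omega

end GreedyAux

/-- Theorem 9.  Every greedy frame schedule earns at least
half of the debt-weighted reward of any frame schedule; hence the Greedy
Maximizer is a 2-approximation policy. -/
theorem greedy_frame_schedule_two_approx
    {S : Type*} [Fintype S] [Nonempty S] [DecidableEq S]
    (τ : S → ℕ) (hτ : ∀ X, 0 < τ X)
    (T : ℕ) (hT : T = Finset.univ.lcm τ)
    (r : S → ℕ → ℝ)
    (hr_nonneg : ∀ X i, 0 ≤ r X i)
    (hr_anti : ∀ X i, 1 ≤ i → r X (i + 1) ≤ r X i)
    (hr_ext : ∀ X i, τ X < i → r X i = 0)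
    (d : S → ℝ) (hd : ∀ X, 0 ≤ d X)
    (σGM : ℕ → Option S)
    (hgreedy : ∀ t : ℕ, t < T → ∃ Y : S, σGM t = some Y ∧
      ∀ Z : S, d Z * r Z (execsSoFar τ σGM Z t + 1) ≤
        d Y * r Y (execsSoFar τ σGM Y t + 1)) :
    ∀ σ : ℕ → Option S,
      (1 / 2) * ∑ X : S, d X * reward τ T r σ X ≤
        ∑ X : S, d X * reward τ T r σGM X := by
  intro σ
  have hdvd : ∀ X, τ X ∣ T := fun X => hT ▸ Finset.dvd_lcm (Finset.mem_univ X)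
  have hrle : ∀ X a b, 1 ≤ a → a ≤ b → r X b ≤ r X a := by
    intro X a b h1 h2
    induction b, h2 using Nat.le_induction with
    | base => exact le_refl _
    | succ b hb ihb => exact le_trans (hr_anti X b (le_trans h1 hb)) ihb
  -- the greedy gain at slot t
  have hGM_sum : ∑ t ∈ Finset.range T,
      (σGM t).elim 0 (fun Z => d Z * r Z (execsSoFar τ σGM Z t + 1))
      = ∑ X : S, d X * reward τ T r σGM X := by
    rw [GreedyAux.slot_sum τ T hdvd σGM (fun X _ k => d X * r X k)]
    simp [reward, Finset.mul_sum]
  have hσ_sum : ∑ t ∈ Finset.range T,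
      (σ t).elim 0 (fun Z => d Z * r Z (execsSoFar τ σ Z t + 1))
      = ∑ X : S, d X * reward τ T r σ X := by
    rw [GreedyAux.slot_sum τ T hdvd σ (fun X _ k => d X * r X k)]
    simp [reward, Finset.mul_sum]
  have hGnonneg : ∀ t, (0:ℝ) ≤
      (σGM t).elim 0 (fun Z => d Z * r Z (execsSoFar τ σGM Z t + 1)) := by
    intro t
    cases h : σGM t with
    | none => simp
    | some Z => simpa [h] using mul_nonneg (hd Z) (hr_nonneg Z _)
  have hCnonneg : ∀ t, (0:ℝ) ≤
      (σ t).elim 0 (fun Z =>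
        if execsSoFar τ σ Z t + 1 ≤ execCount τ σGM Z (t / τ Z)
        then d Z * r Z (execsSoFar τ σ Z t + 1) else 0) := by
    intro t
    cases h : σ t with
    | none => simp
    | some Z =>
      rw [Option.elim_some]
      split
      · exact mul_nonneg (hd Z) (hr_nonneg Z _)
      · exact le_refl _
  -- the charge sum is bounded by the greedy total
  have hC_sum : ∑ t ∈ Finset.range T,
      (σ t).elim 0 (fun Z =>
        if execsSoFar τ σ Z t + 1 ≤ execCount τ σGM Z (t / τ Z)
        then d Z * r Z (execsSoFar τ σ Z t + 1) else 0)
      ≤ ∑ X : S, d X * reward τ T r σGM X := by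
    rw [GreedyAux.slot_sum τ T hdvd σ
      (fun X p k => if k ≤ execCount τ σGM X p then d X * r X k else 0)]
    refine Finset.sum_le_sum (fun X _ => ?_)
    rw [reward, Finset.mul_sum]
    refine Finset.sum_le_sum (fun p _ => ?_)
    rw [Finset.mul_sum, Finset.sum_ite, Finset.sum_const_zero, add_zero]
    apply Finset.sum_le_sum_of_subset_of_nonneg
    · intro k hk
      simp only [Finset.mem_filter, Finset.mem_Icc] at hk ⊢
      exact ⟨hk.1.1, hk.2⟩
    · intro k _ _
      exact mul_nonneg (hd X) (hr_nonneg X k)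
  -- per-slot inequality
  have hslot : ∀ t ∈ Finset.range T,
      (σ t).elim 0 (fun Z => d Z * r Z (execsSoFar τ σ Z t + 1)) ≤
      (σGM t).elim 0 (fun Z => d Z * r Z (execsSoFar τ σGM Z t + 1)) +
      (σ t).elim 0 (fun Z =>
        if execsSoFar τ σ Z t + 1 ≤ execCount τ σGM Z (t / τ Z)
        then d Z * r Z (execsSoFar τ σ Z t + 1) else 0) := by
    intro t ht
    rw [Finset.mem_range] at ht
    cases h : σ t with
    | none =>
      simp only [Option.elim_none, add_zero]
      exact hGnonneg t
    | some Z =>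
      simp only [Option.elim_some]
      by_cases hcase : execsSoFar τ σ Z t + 1 ≤ execCount τ σGM Z (t / τ Z)
      · rw [if_pos hcase]
        linarith [hGnonneg t]
      · rw [if_neg hcase, add_zero]
        have hi : execsSoFar τ σGM Z t ≤ execCount τ σGM Z (t / τ Z) :=
          GreedyAux.execsSoFar_le_execCount τ hτ σGM Z t
        have hij : execsSoFar τ σGM Z t + 1 ≤ execsSoFar τ σ Z t + 1 := by omega
        have h1 : d Z * r Z (execsSoFar τ σ Z t + 1) ≤
            d Z * r Z (execsSoFar τ σGM Z t + 1) :=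
          mul_le_mul_of_nonneg_left
            (hrle Z (execsSoFar τ σGM Z t + 1) (execsSoFar τ σ Z t + 1)
              (by omega) hij) (hd Z)
        obtain ⟨Y, hY, hmax⟩ := hgreedy t ht
        calc d Z * r Z (execsSoFar τ σ Z t + 1)
            ≤ d Z * r Z (execsSoFar τ σGM Z t + 1) := h1
          _ ≤ d Y * r Y (execsSoFar τ σGM Y t + 1) := hmax Z
          _ = (σGM t).elim 0 (fun W => d W * r W (execsSoFar τ σGM W t + 1)) := by
              rw [hY, Option.elim_some]
  have h2 := Finset.sum_le_sum hslot
  rw [Finset.sum_add_distrib, hσ_sum, hGM_sum] at h2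
  linarith [hC_sum, h2]
end
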